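/- Let γ ∈ (0,1) and set λ = 1/(1−γ) − 1 = γ/(1−γ). Let Ã be a symmetric n×n matrix with spectral radius at most 1 and L = I − Ã. For a given matrix S ∈ R^{n×c}, the unique minimizer of the graph signal denoising objective F ↦ ‖F − S‖_F² + λ·tr(FᵀLF) over F ∈ R^{n×c} is F* = (1−γ)(I − γÃ)^{-1} S, i.e., the PPNP propagation applied to S. -/

import Mathlib

open Matrix

theorem aux_L_psd (n : ℕ) (A : Matrix (Fin n) (Fin n) ℝ) (hA : A.IsSymm)
    (hspec : ∀ μ : ℝ, Module.End.HasEigenvalue (Matrix.toLin' A) μ → |μ| ≤ 1) :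
    ((1 : Matrix (Fin n) (Fin n) ℝ) - A).PosSemidef := by
  have hH : ((1 : Matrix (Fin n) (Fin n) ℝ) - A).IsHermitian := by
    have : Aᴴ = A := by
      exact (Matrix.conjTranspose_eq_transpose_of_trivial A).trans hA
    exact (Matrix.isHermitian_one).sub this
  refine hH.posSemidef_iff_eigenvalues_nonneg.mpr fun i => ?_
  set e := hH.eigenvalues i with he
  set v : Fin n → ℝ := ⇑(hH.eigenvectorBasis i) with hvdef
  have hv : (1 - A) *ᵥ v = e • v := hH.mulVec_eigenvectorBasis i
  have hv0 : v ≠ 0 := by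
    have := hH.eigenvectorBasis.orthonormal.ne_zero i
    intro h; apply this; ext k; exact congrFun h k
  have hAv : A *ᵥ v = (1 - e) • v := by
    have h1 : (1 : Matrix (Fin n) (Fin n) ℝ) *ᵥ v - A *ᵥ v = e • v := by
      rw [← Matrix.sub_mulVec]; exact hv
    rw [Matrix.one_mulVec] at h1
    rw [sub_smul, one_smul, ← h1]; abel
  have heig : Module.End.HasEigenvalue (Matrix.toLin' A) (1 - e) := by
    apply Module.End.hasEigenvalue_of_hasEigenvector (x := v)
    refine ⟨Module.End.mem_eigenspace_iff.mpr ?_, hv0⟩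
    rw [Matrix.toLin'_apply]; exact hAv
  have habs := abs_le.mp (hspec _ heig)
  show (0 : ℝ) ≤ e
  linarith [habs.2]

theorem aux_trace_col (n c : ℕ) (M : Matrix (Fin n) (Fin n) ℝ)
    (D : Matrix (Fin n) (Fin c) ℝ) :
    Matrix.trace (Dᵀ * M * D) = ∑ j, (fun i => D i j) ⬝ᵥ M *ᵥ (fun i => D i j) := by
  simp only [Matrix.trace, Matrix.diag, Matrix.mul_apply, Matrix.transpose_apply,
    dotProduct, Matrix.mulVec, Finset.sum_mul, Finset.mul_sum]
  refine Finset.sum_congr rfl fun j _ => ?_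
  rw [Finset.sum_comm]
  exact Finset.sum_congr rfl fun i _ => Finset.sum_congr rfl fun k _ => by ring

theorem aux_quad (n c : ℕ) (M : Matrix (Fin n) (Fin n) ℝ) (hM : M.PosDef)
    (D : Matrix (Fin n) (Fin c) ℝ) :
    0 ≤ Matrix.trace (Dᵀ * M * D) ∧ (Matrix.trace (Dᵀ * M * D) = 0 → D = 0) := by
  rw [aux_trace_col]
  have hterm : ∀ j, 0 ≤ (fun i => D i j) ⬝ᵥ M *ᵥ (fun i => D i j) := by
    intro j
    simpa using hM.posSemidef.dotProduct_mulVec_nonneg (fun i => D i j)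
  constructor
  · exact Finset.sum_nonneg fun j _ => hterm j
  · intro h
    have hz := (Finset.sum_eq_zero_iff_of_nonneg (fun j _ => hterm j)).mp h
    ext i j
    by_contra hne
    have hcol : (fun i => D i j) ≠ 0 := by
      intro h0; exact hne (by simpa using congrFun h0 i)
    have hpos : 0 < (fun i => D i j) ⬝ᵥ M *ᵥ (fun i => D i j) := by
      simpa using hM.dotProduct_mulVec_pos hcol
    linarith [hz j (Finset.mem_univ j)]

theorem aux_herm_smul {n : ℕ} (c : ℝ) {P : Matrix (Fin n) (Fin n) ℝ}
    (h : P.IsHermitian) : (c • P).IsHermitian := by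
  show (c • P)ᴴ = c • P
  rw [Matrix.conjTranspose_smul, star_trivial, h.eq]

/-- With γ ∈ (0,1), λ = γ/(1−γ), Ã symmetric with spectral radius ≤ 1,
L = I − Ã, and S ∈ ℝ^{n×c}, the unique minimizer over F of
‖F − S‖_F² + λ·tr(FᵀLF) (with ‖M‖_F² written as tr(MᵀM)) is
F* = (1−γ)(I − γÃ)⁻¹ S, the PPNP propagation applied to S. -/
theorem stmt_5 (n c : ℕ) (γ : ℝ) (hγ : γ ∈ Set.Ioo (0 : ℝ) 1)
    (lam : ℝ) (hlam : lam = γ / (1 - γ))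
    (A : Matrix (Fin n) (Fin n) ℝ) (hA : A.IsSymm)
    (hspec : ∀ μ : ℝ, Module.End.HasEigenvalue (Matrix.toLin' A) μ → |μ| ≤ 1)
    (L : Matrix (Fin n) (Fin n) ℝ) (hL : L = 1 - A)
    (S : Matrix (Fin n) (Fin c) ℝ)
    (obj : Matrix (Fin n) (Fin c) ℝ → ℝ)
    (hobj : obj = fun F => Matrix.trace ((F - S)ᵀ * (F - S)) + lam * Matrix.trace (Fᵀ * L * F))
    (Fstar : Matrix (Fin n) (Fin c) ℝ)
    (hFstar : Fstar = (1 - γ) • (((1 : Matrix (Fin n) (Fin n) ℝ) - γ • A)⁻¹ * S)) :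
    (∀ F, obj Fstar ≤ obj F) ∧ (∀ F, obj F = obj Fstar → F = Fstar) := by
  obtain ⟨hγ0, hγ1⟩ := hγ
  have h1γ : (0:ℝ) < 1 - γ := by linarith
  -- L is PSD
  have hLpsd : L.PosSemidef := hL ▸ aux_L_psd n A hA hspec
  -- B := 1 - γ•A is positive definite
  set B : Matrix (Fin n) (Fin n) ℝ := 1 - γ • A with hB
  have hBeq : B = (1 - γ) • (1 : Matrix (Fin n) (Fin n) ℝ) + γ • L := by
    rw [hB, hL, smul_sub, sub_smul, one_smul]; abel
  have hγLpsd : (γ • L).PosSemidef := by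
    refine Matrix.PosSemidef.of_dotProduct_mulVec_nonneg (aux_herm_smul γ hLpsd.1) fun x => ?_
    rw [Matrix.smul_mulVec, dotProduct_smul, smul_eq_mul]
    exact mul_nonneg hγ0.le (hLpsd.dotProduct_mulVec_nonneg x)
  have hIdpos : ((1 - γ) • (1 : Matrix (Fin n) (Fin n) ℝ)).PosDef := by
    refine Matrix.PosDef.of_dotProduct_mulVec_pos (aux_herm_smul (1-γ) Matrix.isHermitian_one) fun x hx => ?_
    rw [Matrix.smul_mulVec, Matrix.one_mulVec, dotProduct_smul, smul_eq_mul]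
    exact mul_pos h1γ (Matrix.dotProduct_star_self_pos_iff.mpr hx)
  have hBpos : B.PosDef := hBeq ▸ hIdpos.add_posSemidef hγLpsd
  have hBunit : IsUnit B.det := hBpos.det_pos.ne'.isUnit
  -- M := 1 + lam • L
  set M : Matrix (Fin n) (Fin n) ℝ := 1 + lam • L with hM
  have hlam' : (1 - γ) * lam = γ := by rw [hlam]; field_simp
  have hlamnn : 0 ≤ lam := by rw [hlam]; positivity
  have hMB : (1 - γ) • M = B := by
    rw [hM, hBeq, smul_add, smul_smul, hlam']
  have hMpos : M.PosDef := by
    have : M = (1 - γ)⁻¹ • B := by rw [← hMB, smul_smul, inv_mul_cancel₀ h1γ.ne', one_smul]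
    rw [this]
    refine Matrix.PosDef.of_dotProduct_mulVec_pos (aux_herm_smul _ hBpos.1) fun x hx => ?_
    rw [Matrix.smul_mulVec, dotProduct_smul, smul_eq_mul]
    exact mul_pos (by positivity) (hBpos.dotProduct_mulVec_pos hx)
  -- key: M * Fstar = S
  have hMF : M * Fstar = S := by
    rw [hFstar, Matrix.mul_smul, ← Matrix.smul_mul, hMB, ← Matrix.mul_assoc,
      Matrix.mul_nonsing_inv B hBunit, Matrix.one_mul]
  -- trace symmetry helpers
  have hsym : ∀ X Y : Matrix (Fin n) (Fin c) ℝ,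
      Matrix.trace (Xᵀ * Y) = Matrix.trace (Yᵀ * X) := by
    intro X Y
    rw [← Matrix.trace_transpose (Yᵀ * X), Matrix.transpose_mul, Matrix.transpose_transpose]
  have hLt : Lᵀ = L := by
    rw [hL, Matrix.transpose_sub, Matrix.transpose_one, hA]
  have hLsym : ∀ X Y : Matrix (Fin n) (Fin c) ℝ,
      Matrix.trace (Xᵀ * L * Y) = Matrix.trace (Yᵀ * L * X) := by
    intro X Y
    rw [← Matrix.trace_transpose (Yᵀ * L * X)]
    simp only [Matrix.transpose_mul, Matrix.transpose_transpose, hLt, Matrix.mul_assoc]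
  -- the key expansion
  have key : ∀ F, obj F = obj Fstar + Matrix.trace ((F - Fstar)ᵀ * M * (F - Fstar)) := by
    intro F
    set G := Fstar
    set D := F - G with hD
    have hF : F = G + D := by rw [hD]; abel
    have e1 : Matrix.trace ((G + D - S)ᵀ * (G + D - S)) =
        Matrix.trace ((G - S)ᵀ * (G - S)) + 2 * Matrix.trace (Dᵀ * (G - S)) +
          Matrix.trace (Dᵀ * D) := by
      simp only [Matrix.transpose_add, Matrix.transpose_sub, Matrix.add_mul, Matrix.mul_add,
        Matrix.sub_mul, Matrix.mul_sub, Matrix.trace_add, Matrix.trace_sub]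
      linarith [hsym G D, hsym S D, hsym S G]
    have e2 : Matrix.trace ((G + D)ᵀ * L * (G + D)) =
        Matrix.trace (Gᵀ * L * G) + 2 * Matrix.trace (Dᵀ * L * G) +
          Matrix.trace (Dᵀ * L * D) := by
      simp only [Matrix.transpose_add, Matrix.add_mul, Matrix.mul_add, Matrix.trace_add]
      linarith [hLsym G D]
    have e3 : Matrix.trace (Dᵀ * M * D) =
        Matrix.trace (Dᵀ * D) + lam * Matrix.trace (Dᵀ * L * D) := by
      rw [hM]
      simp only [Matrix.mul_add, Matrix.add_mul, Matrix.mul_one, Matrix.mul_smul,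
        Matrix.smul_mul, Matrix.trace_add, Matrix.trace_smul, smul_eq_mul]
    have e4 : Matrix.trace (Dᵀ * (G - S)) + lam * Matrix.trace (Dᵀ * L * G) = 0 := by
      have h0 : G - S + lam • (L * G) = 0 := by
        have : G + lam • (L * G) = S := by
          rw [← hMF, hM, Matrix.add_mul, Matrix.one_mul, Matrix.smul_mul]
        rw [← this]; abel
      have := congrArg (fun X => Matrix.trace (Dᵀ * X)) h0
      simp only [Matrix.mul_add, Matrix.mul_sub, Matrix.mul_smul, Matrix.trace_add,
        Matrix.trace_sub, Matrix.trace_smul, smul_eq_mul, Matrix.mul_zero,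
        Matrix.trace_zero, Matrix.mul_assoc] at this
      simp only [Matrix.mul_sub, Matrix.trace_sub, Matrix.mul_assoc]
      linarith
    rw [hobj]
    simp only [hF]
    rw [e1, e2, e3]
    ring_nf
    ring_nf at e4
    linarith
  constructor
  · intro F
    have := (aux_quad n c M hMpos (F - Fstar)).1
    linarith [key F]
  · intro F hF
    have h0 : Matrix.trace ((F - Fstar)ᵀ * M * (F - Fstar)) = 0 := by
      have := key F; linarith
    have := (aux_quad n c M hMpos (F - Fstar)).2 h0
    have := sub_eq_zero.mp this
    exact this
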